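/- Let m ≡ 1 (mod 6) with m ≥ 7, n = 2^m − 1, and v = 2^{(m−1)/2} − 1. Then for every integer a with 2^{m−1} + 2^{(m−1)/2} + 1 ≤ a ≤ 2^{m−1} + 2^{(m−1)/2} + 2^{(m−3)/2} + 1, the binary weight of (a·v mod n) is congruent to 2 modulo 3. -/
import Mathlib


def w2 (x : ℕ) : ℕ := (Nat.digits 2 x).sum

lemma w2_two_mul_add (x r : ℕ) (hr : r < 2) :
    w2 (2 * x + r) = w2 x + r := by
  rcases Nat.eq_zero_or_pos (2 * x + r) with h | h
  · have hx : x = 0 := by omega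
    have hr0 : r = 0 := by omega
    simp [hx, hr0, w2]
  · have h1 : (2 * x + r) % 2 = r := by omega
    have h2 : (2 * x + r) / 2 = x := by omega
    unfold w2
    rw [Nat.digits_def' (by norm_num : (1:ℕ) < 2) h, h1, h2]
    simp [Nat.add_comm]

lemma w2_compl : ∀ j b : ℕ, b < 2 ^ j → w2 b + w2 (2 ^ j - 1 - b) = j := by
  intro j
  induction j with
  | zero =>
    intro b hb
    have : b = 0 := by simpa using hb
    simp [this, w2]
  | succ j ih =>
    intro b hb
    have hp : 2 ^ (j + 1) = 2 * 2 ^ j := by ring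
    have hpos : 0 < 2 ^ j := Nat.two_pow_pos j
    rw [hp] at hb
    have hq : b / 2 < 2 ^ j := by omega
    have e1 : b = 2 * (b / 2) + b % 2 := by omega
    have e2 : 2 ^ (j + 1) - 1 - b = 2 * (2 ^ j - 1 - b / 2) + (1 - b % 2) := by
      omega
    have h1 := w2_two_mul_add (b / 2) (b % 2) (by omega)
    rw [← e1] at h1
    have h2 := w2_two_mul_add (2 ^ j - 1 - b / 2) (1 - b % 2) (by omega)
    rw [← e2] at h2
    have h3 := ih (b / 2) hq
    omega

lemma w2_split : ∀ k a c : ℕ, a < 2 ^ k → w2 (a + 2 ^ k * c) = w2 a + w2 c := by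
  intro k
  induction k with
  | zero =>
    intro a c ha
    have : a = 0 := by simpa using ha
    simp [this, w2]
  | succ k ih =>
    intro a c ha
    have hp : 2 ^ (k + 1) = 2 * 2 ^ k := by ring
    rw [hp] at ha ⊢
    have e1 : a + 2 * 2 ^ k * c = 2 * (a / 2 + 2 ^ k * c) + a % 2 := by
      have : 2 * 2 ^ k * c = 2 * (2 ^ k * c) := by ring
      omega
    have e2 : a = 2 * (a / 2) + a % 2 := by omega
    have h1 := w2_two_mul_add (a / 2 + 2 ^ k * c) (a % 2) (by omega)
    rw [← e1] at h1
    have h2 := w2_two_mul_add (a / 2) (a % 2) (by omega)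
    rw [← e2] at h2
    have h3 := ih (a / 2) c (by omega)
    omega

lemma w2_pow_sub_one (j : ℕ) : w2 (2 ^ j - 1) = j := by
  have h := w2_compl j 0 (Nat.two_pow_pos j)
  simpa [w2] using h

theorem stmt5 (m : ℕ) (hm : m % 6 = 1) (hm7 : 7 ≤ m)
    (n v : ℕ) (hn : n = 2 ^ m - 1) (hv : v = 2 ^ ((m - 1) / 2) - 1) :
    ∀ a : ℕ, 2 ^ (m - 1) + 2 ^ ((m - 1) / 2) + 1 ≤ a →
      a ≤ 2 ^ (m - 1) + 2 ^ ((m - 1) / 2) + 2 ^ ((m - 3) / 2) + 1 →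
      w2 (a * v % n) % 3 = 2 := by
  intro a ha1 ha2
  obtain ⟨t, ht⟩ : ∃ t, m = 6 * t + 1 := ⟨m / 6, by omega⟩
  have ht1 : 1 ≤ t := by omega
  obtain ⟨q, hqdef⟩ : ∃ q, q = 2 ^ (3 * t - 1) := ⟨_, rfl⟩
  have hq1 : 1 ≤ q := hqdef ▸ Nat.two_pow_pos _
  have hm1 : (m - 1) / 2 = 3 * t := by omega
  have hm3 : (m - 3) / 2 = 3 * t - 1 := by omega
  have h2k : 2 ^ (3 * t) = 2 * q := by
    have e : 3 * t = (3 * t - 1) + 1 := by omega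
    rw [e, pow_succ, hqdef]; ring
  have h2m1 : 2 ^ (m - 1) = 4 * q ^ 2 := by
    have e : m - 1 = (3 * t - 1) * 2 + 2 := by omega
    rw [e, pow_add, pow_mul, hqdef]; ring
  have h2m : 2 ^ m = 8 * q ^ 2 := by
    have e : m = (3 * t - 1) * 2 + 3 := by omega
    rw [e, pow_add, pow_mul, hqdef]; ring
  rw [hm1, h2m1, h2k] at ha1
  rw [hm1, hm3, h2m1, h2k, ← hqdef] at ha2
  obtain ⟨b, hbdef⟩ : ∃ b, b = a - (4 * q ^ 2 + 2 * q + 1) := ⟨_, rfl⟩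
  have hab : a = 4 * q ^ 2 + 2 * q + 1 + b := by omega
  have hbq : b ≤ q := by omega
  have hveq : v = 2 * q - 1 := by rw [hv, hm1, h2k]
  have hneq : n = 8 * q ^ 2 - 1 := by rw [hn, h2m]
  obtain ⟨X, hXdef⟩ : ∃ X, X = q - 1 + b * (2 * q - 1) := ⟨_, rfl⟩
  have h2q : (1:ℕ) ≤ 2 * q := by omega
  have hq2 : (1:ℕ) ≤ q ^ 2 := Nat.one_le_pow _ _ (by omega)
  have h8q : (1:ℕ) ≤ 8 * q ^ 2 := by omega
  have hav : a * v = n * q + X := by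
    rw [hab, hveq, hneq, hXdef]
    zify [hq1, h2q, h8q]
    ring
  have hXn : X < n := by
    have h1 : b * (2 * q - 1) ≤ q * (2 * q - 1) := Nat.mul_le_mul_right _ hbq
    have h2 : q * (2 * q - 1) + q = 2 * q ^ 2 := by
      zify [h2q]; ring
    rw [hneq, hXdef]
    omega
  have hmod : a * v % n = X := by
    rw [hav, Nat.mul_add_mod, Nat.mod_eq_of_lt hXn]
  rw [hmod]
  rcases eq_or_lt_of_le hbq with hbq' | hbq'
  · -- b = q : X = 2 q^2 - 1 = 2^(6t-1) - 1
    have hXeq : X = 2 ^ (6 * t - 1) - 1 := by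
      have e : 2 ^ (6 * t - 1) = 2 * q ^ 2 := by
        have e2 : 6 * t - 1 = (3 * t - 1) * 2 + 1 := by omega
        rw [e2, pow_add, pow_mul, hqdef]; ring
      rw [hXdef, hbq', e]
      zify [hq1, h2q, show (1:ℕ) ≤ 2 * q ^ 2 by omega]
      ring
    rw [hXeq, w2_pow_sub_one]
    omega
  · -- b < q : X = (q-1-b) + 2^(3t) * b
    have hXsplit : X = (q - 1 - b) + 2 ^ (3 * t) * b := by
      rw [hXdef, h2k]
      zify [hq1, h2q, show b + 1 ≤ q by omega, show b ≤ q - 1 by omega]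
      ring
    have hlow : q - 1 - b < 2 ^ (3 * t) := by rw [h2k]; omega
    have hw : w2 X = w2 (q - 1 - b) + w2 b := by
      rw [hXsplit, w2_split _ _ _ hlow]
    have hc := w2_compl (3 * t - 1) b (by rw [← hqdef]; omega)
    rw [← hqdef] at hc
    omega
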